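/- arXiv:1306.1297 — 2 statements merged into one kernel-verified Lean document; each statement's English description precedes it below -/
import Mathlib

section
/- Let λ ∈ ℝ and let y : ℝ → ℝ be twice continuously differentiable and satisfy (a(x)²/2)·y''(x) + b(x)·y'(x) = λ·y(x) for all x ∈ ℝ. Then for every x₀, x ∈ ℝ, y admits the integral representation y(x) = y(x₀) + y'(x₀)·Φ(x₀,x) + 2λ·∫_{x₀}^{x} (Φ(s,x)/a(s)²)·y(s) ds. -/
/-- If `y` is `C²` and solves `(a²/2)y'' + b y' = λ y` on `ℝ`, then it admits the
integral representation
`y(x) = y(x₀) + y'(x₀)·Φ(x₀,x) + 2λ·∫_{x₀}^{x} (Φ(s,x)/a(s)²)·y(s) ds`. -/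
theorem stmt_5 (a b : ℝ → ℝ) (ha : Continuous a) (hb : Continuous b)
    (ha0 : ∀ x, a x ≠ 0)
    (φ Φ : ℝ → ℝ → ℝ)
    (hφ : ∀ x₀ x, φ x₀ x = Real.exp (-2 * ∫ u in x₀..x, b u / (a u) ^ 2))
    (hΦ : ∀ x₀ x, Φ x₀ x = ∫ z in x₀..x, φ x₀ z)
    (lam : ℝ) (y : ℝ → ℝ) (hy : ContDiff ℝ 2 y)
    (hode : ∀ x, (a x) ^ 2 / 2 * deriv (deriv y) x + b x * deriv y x = lam * y x) :
    ∀ x₀ x : ℝ,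
      y x = y x₀ + deriv y x₀ * Φ x₀ x
        + 2 * lam * ∫ s in x₀..x, Φ s x / (a s) ^ 2 * y s := by
  have h1 : ContDiff ℝ 1 (deriv y) := by
    have := (contDiff_succ_iff_deriv (n := 1)).1 (by exact_mod_cast hy)
    exact this.2.2
  have hy'c : Continuous (deriv y) := h1.continuous
  have hyd : Differentiable ℝ y := hy.differentiable two_ne_zero
  have hy'd : Differentiable ℝ (deriv y) := h1.differentiable one_ne_zero
  have ha2 : ∀ u, a u ^ 2 ≠ 0 := fun u => pow_ne_zero 2 (ha0 u)
  have hq : Continuous fun u => b u / a u ^ 2 := hb.div (ha.pow 2) ha2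
  intro x₀ x
  set H : ℝ → ℝ := fun t => ∫ u in x₀..t, b u / a u ^ 2 with hH_def
  have hH : ∀ t, HasDerivAt H (b t / a t ^ 2) t := fun t =>
    intervalIntegral.integral_hasDerivAt_right (hq.intervalIntegrable _ _)
      (hq.stronglyMeasurableAtFilter _ _) hq.continuousAt
  have hHc : Continuous H := by
    rw [continuous_iff_continuousAt]; exact fun t => (hH t).continuousAt
  set w : ℝ → ℝ := fun t => Real.exp (-2 * H t) with hw_def
  set μ : ℝ → ℝ := fun t => Real.exp (2 * H t) with hμ_def
  have hμw : ∀ t, w t * μ t = 1 := by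
    intro t
    rw [hw_def, hμ_def, ← Real.exp_add]
    norm_num
  have hw : ∀ t, HasDerivAt w (w t * (-2 * (b t / a t ^ 2))) t := fun t =>
    ((hH t).const_mul (-2)).exp
  have hμ : ∀ t, HasDerivAt μ (μ t * (2 * (b t / a t ^ 2))) t := fun t =>
    ((hH t).const_mul 2).exp
  have hwc : Continuous w := Real.continuous_exp.comp (continuous_const.mul hHc)
  have hμc : Continuous μ := Real.continuous_exp.comp (continuous_const.mul hHc)
  set c : ℝ → ℝ := fun u => 2 * lam * y u / a u ^ 2 with hc_def
  have hcc : Continuous c := (continuous_const.mul hyd.continuous).div (ha.pow 2) ha2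
  -- Step 1: integrating factor
  have hstep : ∀ t, HasDerivAt (fun t => μ t * deriv y t) (μ t * c t) t := by
    intro t
    have h := (hμ t).mul ((hy'd t).hasDerivAt)
    refine h.congr_deriv ?_
    have key : c t = 2 * (b t / a t ^ 2) * deriv y t + deriv (deriv y) t := by
      have ho := hode t
      show 2 * lam * y t / a t ^ 2 = _
      have e : 2 * lam * y t = 2 * (lam * y t) := by ring
      rw [e, ← ho]
      have hinv : a t ^ 2 * (a t)⁻¹ ^ 2 = 1 := by rw [← mul_pow, mul_inv_cancel₀ (ha0 t), one_pow]
      linear_combination deriv (deriv y) t * hinv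
    rw [key]; ring
  have hμcI : IntervalIntegrable (fun u => μ u * c u) MeasureTheory.volume x₀ x := by
    exact (hμc.mul hcc).intervalIntegrable _ _
  set J : ℝ → ℝ := fun t => ∫ u in x₀..t, μ u * c u with hJ_def
  have hJ : ∀ t, HasDerivAt J (μ t * c t) t := fun t =>
    intervalIntegral.integral_hasDerivAt_right ((hμc.mul hcc).intervalIntegrable _ _)
      ((hμc.mul hcc).stronglyMeasurableAtFilter _ _) (hμc.mul hcc).continuousAt
  have hμx₀ : μ x₀ = 1 := by simp [hμ_def, hH_def]
  have hFTC : ∀ t, μ t * deriv y t - deriv y x₀ = J t := by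
    intro t
    have h := intervalIntegral.integral_eq_sub_of_hasDerivAt (f := fun t => μ t * deriv y t)
      (f' := fun t => μ t * c t) (a := x₀) (b := t) (fun u _ => hstep u)
      ((hμc.mul hcc).intervalIntegrable _ _)
    have h2 : (∫ u in x₀..t, μ u * c u) = μ t * deriv y t - μ x₀ * deriv y x₀ := by
      simpa using h
    simp only [hJ_def]
    rw [h2, hμx₀]; ring
  have hy' : ∀ t, deriv y t = w t * (deriv y x₀ + J t) := by
    intro t
    have h2 := hFTC t
    calc deriv y t = (w t * μ t) * deriv y t := by rw [hμw t]; ring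
    _ = w t * (deriv y x₀ + J t) := by rw [mul_assoc]; rw [show μ t * deriv y t = deriv y x₀ + J t by linarith]
  -- Step 2: second integration
  set G : ℝ → ℝ := fun t => ∫ z in x₀..t, w z with hG_def
  have hG : ∀ t, HasDerivAt G (w t) t := fun t =>
    intervalIntegral.integral_hasDerivAt_right (hwc.intervalIntegrable _ _)
      (hwc.stronglyMeasurableAtFilter _ _) hwc.continuousAt
  have hGc : Continuous G := by
    rw [continuous_iff_continuousAt]; exact fun t => (hG t).continuousAt
  set K : ℝ → ℝ := fun t => ∫ s in x₀..t, G s * (μ s * c s) with hK_def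
  have hKint : Continuous fun s => G s * (μ s * c s) := hGc.mul (hμc.mul hcc)
  have hK : ∀ t, HasDerivAt K (G t * (μ t * c t)) t := fun t =>
    intervalIntegral.integral_hasDerivAt_right (hKint.intervalIntegrable _ _)
      (hKint.stronglyMeasurableAtFilter _ _) hKint.continuousAt
  set F : ℝ → ℝ := fun t => y x₀ + deriv y x₀ * G t + G t * J t - K t with hF_def
  have hF : ∀ t, HasDerivAt F (deriv y t) t := by
    intro t
    have h := ((((hG t).const_mul (deriv y x₀)).const_add (y x₀)).add
      ((hG t).mul (hJ t))).sub (hK t)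
    refine h.congr_deriv ?_
    rw [hy' t]; ring
  have hyF : ∀ t, y t = F t := by
    have hdiff : Differentiable ℝ (fun t => y t - F t) :=
      fun t => ((hyd t).hasDerivAt.sub (hF t)).differentiableAt
    have hd : ∀ t, deriv (fun t => y t - F t) t = 0 := by
      intro t
      have := ((hyd t).hasDerivAt.sub (hF t)).deriv
      rw [sub_self] at this
      exact this
    intro t
    have hconst := is_const_of_deriv_eq_zero hdiff hd t x₀
    have hFx₀ : F x₀ = y x₀ := by
      simp [hF_def, hG_def, hJ_def, hK_def]
    have : y t - F t = y x₀ - F x₀ := hconst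
    rw [hFx₀] at this
    linarith
  -- identify Φ in terms of G, μ
  have hΦs : ∀ s, Φ s x = μ s * (G x - G s) := by
    intro s
    have hGsub : (∫ z in s..x, w z) = G x - G s := by
      rw [hG_def]
      exact (intervalIntegral.integral_interval_sub_left (hwc.intervalIntegrable _ _)
        (hwc.intervalIntegrable _ _)).symm
    have hφsz : ∀ z, φ s z = μ s * w z := by
      intro z
      rw [hφ]
      have hint : (∫ u in s..z, b u / a u ^ 2) = H z - H s := by
        rw [hH_def]
        exact (intervalIntegral.integral_interval_sub_left (hq.intervalIntegrable _ _)
          (hq.intervalIntegrable _ _)).symm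
      rw [hint, hμ_def, hw_def, ← Real.exp_add]
      ring_nf
    rw [hΦ]
    calc (∫ z in s..x, φ s z) = ∫ z in s..x, μ s * w z := by
          exact intervalIntegral.integral_congr fun z _ => hφsz z
    _ = μ s * ∫ z in s..x, w z := by rw [intervalIntegral.integral_const_mul]
    _ = μ s * (G x - G s) := by rw [hGsub]
  have hΦx₀ : Φ x₀ x = G x := by
    rw [hΦs x₀, hμx₀]
    have : G x₀ = 0 := by simp [hG_def]
    rw [this]; ring
  have hmain : 2 * lam * (∫ s in x₀..x, Φ s x / a s ^ 2 * y s) = G x * J x - K x := by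
    have e1 : G x * J x = ∫ s in x₀..x, G x * (μ s * c s) := by
      rw [hJ_def, intervalIntegral.integral_const_mul]
    rw [← intervalIntegral.integral_const_mul, e1, hK_def]
    beta_reduce
    rw [← intervalIntegral.integral_sub (f := fun s => G x * (μ s * c s)) (g := fun s => G s * (μ s * c s)) (((continuous_const.mul (hμc.mul hcc))).intervalIntegrable _ _)
        (hKint.intervalIntegrable _ _)]
    apply intervalIntegral.integral_congr
    intro s _
    show 2 * lam * (Φ s x / a s ^ 2 * y s) = G x * (μ s * c s) - G s * (μ s * c s)
    rw [hΦs s, hc_def]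
    field_simp
  rw [hyF x, hΦx₀, hmain, hF_def]
  ring
end

section
/- Let λ ∈ ℝ and let y : ℝ → ℝ be twice continuously differentiable and satisfy (a(x)²/2)·y''(x) + b(x)·y'(x) = λ·y(x) for all x ∈ ℝ. Then for every x₀, x ∈ ℝ, the derivative of y admits the representation y'(x) = y'(x₀)·φ(x₀,x) + 2λ·∫_{x₀}^{x} (φ(s,x)/a(s)²)·y(s) ds. -/
/-- If `y` is `C²` and solves `(a²/2)y'' + b y' = λ y` on `ℝ`, then its derivative
admits the representation
`y'(x) = y'(x₀)·φ(x₀,x) + 2λ·∫_{x₀}^{x} (φ(s,x)/a(s)²)·y(s) ds`. -/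
theorem stmt_6 (a b : ℝ → ℝ) (ha : Continuous a) (hb : Continuous b)
    (ha0 : ∀ x, a x ≠ 0)
    (φ Φ : ℝ → ℝ → ℝ)
    (hφ : ∀ x₀ x, φ x₀ x = Real.exp (-2 * ∫ u in x₀..x, b u / (a u) ^ 2))
    (hΦ : ∀ x₀ x, Φ x₀ x = ∫ z in x₀..x, φ x₀ z)
    (lam : ℝ) (y : ℝ → ℝ) (hy : ContDiff ℝ 2 y)
    (hode : ∀ x, (a x) ^ 2 / 2 * deriv (deriv y) x + b x * deriv y x = lam * y x) :
    ∀ x₀ x : ℝ,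
      deriv y x = deriv y x₀ * φ x₀ x
        + 2 * lam * ∫ s in x₀..x, φ s x / (a s) ^ 2 * y s := by
  intro x₀ x
  have ha2 : ∀ t, (a t) ^ 2 ≠ 0 := fun t => pow_ne_zero 2 (ha0 t)
  have hc : Continuous (fun u => b u / a u ^ 2) := hb.div (ha.pow 2) fun u => ha2 u
  set c : ℝ → ℝ := fun u => b u / a u ^ 2 with hcdef
  set F : ℝ → ℝ := fun t => ∫ u in x₀..t, c u with hFdef
  have hF : ∀ t, HasDerivAt F (c t) t := fun t =>
    intervalIntegral.integral_hasDerivAt_right (hc.intervalIntegrable _ _)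
      (hc.stronglyMeasurableAtFilter _ _) hc.continuousAt
  have hFcont : Continuous F := by
    rw [continuous_iff_continuousAt]; exact fun t => (hF t).continuousAt
  have hψ : ∀ t, HasDerivAt (fun t => Real.exp (2 * F t))
      (Real.exp (2 * F t) * (2 * c t)) t := fun t => ((hF t).const_mul 2).exp
  -- regularity of y
  have h2 : ContDiff ℝ ((1 : WithTop ℕ∞) + 1) y := by norm_num; exact hy
  have hy2' : ContDiff ℝ 1 (deriv y) := (contDiff_succ_iff_deriv.mp h2).2.2
  have hy2 : ∀ t, HasDerivAt (deriv y) (deriv (deriv y) t) t := fun t =>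
    ((hy2'.differentiable one_ne_zero) t).hasDerivAt
  have hycont : Continuous y := hy.continuous
  -- integrating factor
  have hh : ∀ t, HasDerivAt (fun t => Real.exp (2 * F t) * deriv y t)
      (Real.exp (2 * F t) * (2 * lam / a t ^ 2 * y t)) t := by
    intro t
    have h := (hψ t).mul (hy2 t)
    have key : Real.exp (2 * F t) * (2 * c t) * deriv y t
        + Real.exp (2 * F t) * deriv (deriv y) t
        = Real.exp (2 * F t) * (2 * lam / a t ^ 2 * y t) := by
      have h1 := hode t
      have hat := ha2 t
      have hk : 2 * c t * deriv y t + deriv (deriv y) t = 2 * lam / a t ^ 2 * y t := by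
        rw [hcdef]
        field_simp
        rw [div_add' _ _ _ hat, div_left_inj' hat]; linear_combination 2 * h1
      rw [← hk]; ring
    rwa [key] at h
  have hgcont : Continuous (fun t => Real.exp (2 * F t) * (2 * lam / a t ^ 2 * y t)) := by
    apply Continuous.mul
    · exact Real.continuous_exp.comp (continuous_const.mul hFcont)
    · exact ((continuous_const.div (ha.pow 2) ha2).mul hycont)
  have hint := intervalIntegral.integral_eq_sub_of_hasDerivAt
      (f := fun t => Real.exp (2 * F t) * deriv y t)
      (f' := fun t => Real.exp (2 * F t) * (2 * lam / a t ^ 2 * y t))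
      (fun t _ => hh t) (hgcont.intervalIntegrable x₀ x)
  -- express φ through F
  have hφ' : ∀ s, φ s x = Real.exp (2 * F s) * Real.exp (-2 * F x) := by
    intro s
    rw [hφ]
    have hsub : (∫ u in s..x, b u / a u ^ 2) = F x - F s := by
      rw [hFdef]
      exact (intervalIntegral.integral_interval_sub_left (hc.intervalIntegrable x₀ x)
        (hc.intervalIntegrable x₀ s)).symm
    rw [hsub, ← Real.exp_add]; ring_nf
  have hI : (∫ s in x₀..x, φ s x / a s ^ 2 * y s)
      = Real.exp (-2 * F x) * ∫ s in x₀..x, Real.exp (2 * F s) / a s ^ 2 * y s := by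
    rw [← intervalIntegral.integral_const_mul]
    apply intervalIntegral.integral_congr
    intro s _
    show φ s x / a s ^ 2 * y s
        = Real.exp (-2 * F x) * (Real.exp (2 * F s) / a s ^ 2 * y s)
    rw [hφ' s]; ring
  have hJ : (∫ t in x₀..x, Real.exp (2 * F t) * (2 * lam / a t ^ 2 * y t))
      = 2 * lam * ∫ s in x₀..x, Real.exp (2 * F s) / a s ^ 2 * y s := by
    rw [← intervalIntegral.integral_const_mul]
    apply intervalIntegral.integral_congr
    intro s _
    show Real.exp (2 * F s) * (2 * lam / a s ^ 2 * y s)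
        = 2 * lam * (Real.exp (2 * F s) / a s ^ 2 * y s)
    ring
  have hx0 : F x₀ = 0 := intervalIntegral.integral_same
  rw [hJ] at hint
  simp only [hx0, mul_zero, Real.exp_zero, one_mul] at hint
  have hE : Real.exp (-2 * F x) * Real.exp (2 * F x) = 1 := by
    rw [← Real.exp_add]; ring_nf; exact Real.exp_zero
  rw [hφ' x₀, hx0, hI]
  simp only [mul_zero, Real.exp_zero, one_mul]
  linear_combination -Real.exp (-2 * F x) * hint - deriv y x * hE
end
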